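/- arXiv:1603.06122 — 2 statements merged into one kernel-verified Lean document; each statement's English description precedes it below -/
import Mathlib

section
/- Let (f,C) be a low-defect pair of degree r. Then the function δ_{f,C} : ℤ≥0^r → ℝ is strictly increasing in each variable, and sup over all (k₁,…,k_r) ∈ ℤ≥0^r of δ_{f,C}(k₁,…,k_r) equals δ(f,C). -/
/-- `CpxW n k` : the positive integer `n` can be written using exactly `k` ones,
with an arbitrary combination of additions and multiplications. -/
inductive CpxW : ℕ → ℕ → Prop
  | one : CpxW 1 1
  | add {a b m n : ℕ} : CpxW a m → CpxW b n → CpxW (a + b) (m + n)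
  | mul {a b m n : ℕ} : CpxW a m → CpxW b n → CpxW (a * b) (m + n)

/-- The integer complexity `‖n‖`: the least number of 1's needed to write `n`
using additions and multiplications. -/
noncomputable def cpx (n : ℕ) : ℕ := sInf {k | CpxW n k}

/-- The defect `δ(n) = ‖n‖ - 3 log₃ n`. -/
noncomputable def defect (n : ℕ) : ℝ := (cpx n : ℝ) - 3 * Real.logb 3 (n : ℝ)

/-- `LDP r f C` : `(f, C)` is a low-defect pair of degree `r`; here a low-defect
polynomial of degree `r` is written in the variables `X 0, …, X (r-1)`. -/
inductive LDP : ℕ → MvPolynomial ℕ ℤ → ℕ → Prop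
  | const (k C : ℕ) (hk : 0 < k) (hC : cpx k ≤ C) :
      LDP 0 (MvPolynomial.C (k : ℤ)) C
  | mul {r₁ r₂ : ℕ} {f₁ f₂ : MvPolynomial ℕ ℤ} {C₁ C₂ : ℕ} :
      LDP r₁ f₁ C₁ → LDP r₂ f₂ C₂ →
      LDP (r₁ + r₂) (f₁ * MvPolynomial.rename (· + r₁) f₂) (C₁ + C₂)
  | step {r : ℕ} {f : MvPolynomial ℕ ℤ} {C : ℕ} (c D : ℕ) (hc : 0 < c) (hD : cpx c ≤ D) :
      LDP r f C → LDP (r + 1) (f * MvPolynomial.X r + MvPolynomial.C (c : ℤ)) (C + D)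

/-- A low-defect polynomial: the first component of some low-defect pair. -/
def LowDefectPoly (f : MvPolynomial ℕ ℤ) : Prop := ∃ r C, LDP r f C

/-- The leading coefficient of a low-defect polynomial of degree `r`:
the coefficient of `x₁ ⋯ x_r`. -/
noncomputable def leadCoeff (r : ℕ) (f : MvPolynomial ℕ ℤ) : ℤ :=
  MvPolynomial.coeff (∑ i ∈ Finset.range r, Finsupp.single i 1) f

/-- The defect `δ(f,C) = C - 3 log₃ a` of a low-defect pair of degree `r`,
where `a` is the leading coefficient. -/
noncomputable def pairDft (r : ℕ) (f : MvPolynomial ℕ ℤ) (C : ℕ) : ℝ :=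
  (C : ℝ) - 3 * Real.logb 3 ((leadCoeff r f : ℤ) : ℝ)

/-- `f(3^{k₁}, …, 3^{k_r})` for a polynomial of degree `r`. -/
noncomputable def eval3 (r : ℕ) (f : MvPolynomial ℕ ℤ) (k : ℕ → ℕ) : ℤ :=
  MvPolynomial.eval (fun i => if i < r then (3 : ℤ) ^ (k i) else 1) f

/-- `δ_{f,C}(k₁,…,k_r) = C + 3(k₁+⋯+k_r) - 3 log₃ f(3^{k₁},…,3^{k_r})`. -/
noncomputable def dftF (r : ℕ) (f : MvPolynomial ℕ ℤ) (C : ℕ) (k : ℕ → ℕ) : ℝ :=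
  (C : ℝ) + 3 * (∑ i ∈ Finset.range r, (k i : ℝ))
    - 3 * Real.logb 3 ((eval3 r f k : ℤ) : ℝ)

/-- The nesting order: `NestLe f i j` means `xᵢ ⪯ xⱼ`, i.e. every monomial of `f`
divisible by `xᵢ` is divisible by `xⱼ`. -/
def NestLe (f : MvPolynomial ℕ ℤ) (i j : ℕ) : Prop :=
  ∀ m ∈ f.support, m i ≠ 0 → m j ≠ 0

/-- `xᵢ` is a variable of (the degree-`r` polynomial) `f` that is minimal with
respect to the nesting order. -/
def IsMinVar (r : ℕ) (f : MvPolynomial ℕ ℤ) (i : ℕ) : Prop :=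
  i < r ∧ ∀ j < r, NestLe f j i → NestLe f i j

/-- Substituting `3^k` for the variable `xᵢ` of `f`, renumbering the later
variables down by one. -/
noncomputable def truncAt (f : MvPolynomial ℕ ℤ) (i k : ℕ) : MvPolynomial ℕ ℤ :=
  MvPolynomial.aeval (fun j => if j < i then MvPolynomial.X j
    else if j = i then MvPolynomial.C ((3 : ℤ) ^ k) else MvPolynomial.X (j - 1)) f

/-- A direct truncation of a "pair with degree" `(r, f, C)`: substitute `3^k`
into a variable of `f` minimal in the nesting order. -/
def DirectTrunc (a b : ℕ × MvPolynomial ℕ ℤ × ℕ) : Prop :=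
  ∃ i k : ℕ, a.1 = b.1 + 1 ∧ IsMinVar a.1 a.2.1 i ∧
    b.2.1 = truncAt a.2.1 i k ∧ b.2.2 = a.2.2 + 3 * k

/-- `n` is a leader: either `3 ∤ n`, or `3 ∣ n` and `‖n‖ < ‖n/3‖ + 3`. -/
def IsLeader (n : ℕ) : Prop := 0 < n ∧ (3 ∣ n → cpx n < cpx (n / 3) + 3)

/-- `(f, C)` (of degree `r`) efficiently 3-represents `n`. -/
def EffRep (r : ℕ) (f : MvPolynomial ℕ ℤ) (C : ℕ) (n : ℕ) : Prop :=
  ∃ k : ℕ → ℕ, (n : ℤ) = eval3 r f k ∧ cpx n = C + 3 * ∑ i ∈ Finset.range r, k i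

/-- The number of `∗`-entries (free coordinates) of `p` among `0, …, r-1`. -/
def starCount (r : ℕ) (p : ℕ → Option ℕ) : ℕ :=
  ((Finset.range r).filter (fun i => p i = none)).card

/-- The 3-substitution of a tuple `p ∈ (ℤ≥0 ∪ {∗})^r` into `f`: substitute
`3^{kᵢ}` for `xᵢ` whenever `p i = some kᵢ`, renumbering the surviving variables
in increasing order. -/
noncomputable def subst3 (f : MvPolynomial ℕ ℤ) (p : ℕ → Option ℕ) : MvPolynomial ℕ ℤ :=
  MvPolynomial.aeval (fun j =>
    match p j with
    | some k => MvPolynomial.C ((3 : ℤ) ^ k)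
    | none => MvPolynomial.X (((Finset.range j).filter (fun i => p i = none)).card)) f

/-- The insertion map `ι` associated to `p`: inserts the arguments into the
coordinates of `p` equal to `∗`. -/
def iotaMap (p : ℕ → Option ℕ) (ℓ : ℕ → ℕ) : ℕ → ℕ := fun j =>
  match p j with
  | some k => k
  | none => ℓ (((Finset.range j).filter (fun i => p i = none)).card)

open MvPolynomial Finset

noncomputable def topm (r : ℕ) : ℕ →₀ ℕ := ∑ i ∈ Finset.range r, Finsupp.single i 1

lemma topm_apply (r j : ℕ) : topm r j = if j < r then 1 else 0 := by
  classical
  simp only [topm, Finsupp.finset_sum_apply, Finsupp.single_apply]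
  rw [Finset.sum_ite_eq' (Finset.range r) j (fun _ => 1)]
  simp

lemma topm_support (r : ℕ) : (topm r).support = Finset.range r := by
  ext j
  simp [Finsupp.mem_support_iff, topm_apply]

structure Good (r : ℕ) (f : MvPolynomial ℕ ℤ) : Prop where
  supp : ∀ m ∈ f.support, (∀ i, m i ≤ 1) ∧ ∀ i, r ≤ i → m i = 0
  nonneg : ∀ m, 0 ≤ f.coeff m
  const_pos : 1 ≤ f.coeff 0
  lead_pos : 1 ≤ f.coeff (topm r)

lemma mapd_apply (r₁ : ℕ) (d : ℕ →₀ ℕ) (j : ℕ) :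
    (Finsupp.mapDomain (· + r₁) d) j = if r₁ ≤ j then d (j - r₁) else 0 := by
  classical
  have hinj : Function.Injective (· + r₁) := fun a b h => by simpa using h
  by_cases hj : r₁ ≤ j
  · have : j = (j - r₁) + r₁ := by omega
    rw [this, Finsupp.mapDomain_apply hinj]
    simp [hj]
  · rw [Finsupp.mapDomain_notin_range]
    · simp [hj]
    · rintro ⟨a, rfl⟩
      exact hj (by simpa using Nat.le_add_left r₁ a)

lemma topm_split (r₁ r₂ : ℕ) :
    topm (r₁ + r₂) = topm r₁ + Finsupp.mapDomain (· + r₁) (topm r₂) := by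
  ext j
  rw [Finsupp.add_apply, mapd_apply, topm_apply, topm_apply]
  by_cases h : r₁ ≤ j
  · rw [topm_apply]
    split_ifs <;> omega
  · split_ifs <;> omega

lemma good_of_LDP {r : ℕ} {f : MvPolynomial ℕ ℤ} {C : ℕ} (h : LDP r f C) : Good r f := by
  classical
  induction h with
  | const k C hk hC =>
      have hc : ∀ m, MvPolynomial.coeff m (MvPolynomial.C (k:ℤ) : MvPolynomial ℕ ℤ)
          = if m = 0 then (k:ℤ) else 0 := by
        intro m; rw [MvPolynomial.coeff_C]; simp [eq_comm]
      constructor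
      · intro m hm
        have hm0 : m = 0 := by
          by_contra hne
          rw [MvPolynomial.mem_support_iff, hc, if_neg hne] at hm
          exact hm rfl
        subst hm0; simp
      · intro m; rw [hc]; split_ifs <;> simp [Int.ofNat_nonneg]
      · rw [hc]; simp; omega
      · have h0 : topm 0 = 0 := by ext j; simp [topm_apply]
        rw [h0, hc]; simp; omega
  | mul h₁ h₂ ih₁ ih₂ =>
      rename_i r₁ r₂ f₁ f₂ C₁ C₂
      have hinj : Function.Injective (· + r₁) := fun a b h => by simpa using h
      set g₂ := MvPolynomial.rename (· + r₁) f₂ with hg₂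
      -- facts about g₂
      have hg₂coeff : ∀ d, MvPolynomial.coeff (Finsupp.mapDomain (· + r₁) d) g₂
          = MvPolynomial.coeff d f₂ := fun d => MvPolynomial.coeff_rename_mapDomain _ hinj f₂ d
      have hg₂nonneg : ∀ v, 0 ≤ MvPolynomial.coeff v g₂ := by
        intro v
        by_cases hv : MvPolynomial.coeff v g₂ = 0
        · rw [hv]
        · obtain ⟨u, hu, _⟩ := MvPolynomial.coeff_rename_ne_zero _ f₂ v hv
          rw [← hu, hg₂coeff]; exact ih₂.nonneg u
      have hg₂supp : ∀ v ∈ g₂.support, (∀ i, v i ≤ 1) ∧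
          (∀ i, i < r₁ → v i = 0) ∧ (∀ i, r₁ + r₂ ≤ i → v i = 0) := by
        intro v hv
        rw [hg₂, MvPolynomial.support_rename_of_injective hinj, Finset.mem_image] at hv
        obtain ⟨d, hd, rfl⟩ := hv
        obtain ⟨hd1, hd2⟩ := ih₂.supp d hd
        refine ⟨fun i => ?_, fun i hi => ?_, fun i hi => ?_⟩
        · rw [mapd_apply]; split_ifs with h
          · exact hd1 _
          · omega
        · rw [mapd_apply, if_neg (by omega)]
        · rw [mapd_apply, if_pos (by omega)]; exact hd2 _ (by omega)
      constructor
      · intro m hm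
        have := MvPolynomial.support_mul f₁ g₂ hm
        rw [Finset.mem_add] at this
        obtain ⟨u, hu, v, hv, rfl⟩ := this
        obtain ⟨hu1, hu2⟩ := ih₁.supp u hu
        obtain ⟨hv1, hv2, hv3⟩ := hg₂supp v hv
        constructor
        · intro i
          rw [Finsupp.add_apply]
          by_cases hi : i < r₁
          · have := hv2 i hi; have := hu1 i; omega
          · have := hu2 i (by omega); have := hv1 i; omega
        · intro i hi
          rw [Finsupp.add_apply, hu2 i (by omega), hv3 i hi]
      · intro m
        rw [MvPolynomial.coeff_mul]
        exact Finset.sum_nonneg fun p _ => mul_nonneg (ih₁.nonneg p.1) (hg₂nonneg p.2)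
      · have hcc : MvPolynomial.coeff 0 (f₁ * g₂)
            = MvPolynomial.coeff 0 f₁ * MvPolynomial.coeff 0 f₂ := by
          have h1 := map_mul (MvPolynomial.constantCoeff (R := ℤ) (σ := ℕ)) f₁ g₂
          have h2 := MvPolynomial.constantCoeff_rename (· + r₁) f₂
          simp only [MvPolynomial.constantCoeff_eq] at h1 h2
          rw [h1, hg₂, h2]
        rw [hcc]
        nlinarith [ih₁.const_pos, ih₂.const_pos]
      · rw [MvPolynomial.coeff_mul]
        have hmem : (topm r₁, Finsupp.mapDomain (· + r₁) (topm r₂)) ∈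
            Finset.HasAntidiagonal.antidiagonal (topm (r₁ + r₂)) := by
          rw [Finset.HasAntidiagonal.mem_antidiagonal]
          exact (topm_split r₁ r₂).symm
        rw [Finset.sum_eq_single_of_mem _ hmem]
        · rw [hg₂coeff]
          nlinarith [ih₁.lead_pos, ih₂.lead_pos]
        · rintro ⟨u, v⟩ hp hne
          rw [Finset.HasAntidiagonal.mem_antidiagonal] at hp
          by_contra hc0
          have hu : u ∈ f₁.support := by
            rw [MvPolynomial.mem_support_iff]; intro h; apply hc0; rw [h, zero_mul]
          have hv : v ∈ g₂.support := by
            rw [MvPolynomial.mem_support_iff]; intro h; apply hc0; rw [h, mul_zero]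
          obtain ⟨_, hu2⟩ := ih₁.supp u hu
          obtain ⟨_, hv2, hv3⟩ := hg₂supp v hv
          have hsum : ∀ j, u j + v j = topm (r₁ + r₂) j := by
            intro j; rw [← Finsupp.add_apply, hp]
          apply hne
          have hueq : u = topm r₁ := by
            ext j
            rw [topm_apply]
            by_cases hj : j < r₁
            · have h3 := hsum j; rw [topm_apply, if_pos (by omega)] at h3
              have h4 := hv2 j hj
              rw [if_pos hj]; omega
            · rw [if_neg hj]; exact hu2 j (by omega)
          have hveq : v = Finsupp.mapDomain (· + r₁) (topm r₂) := by
            ext j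
            rw [mapd_apply, topm_apply]
            by_cases hj : j < r₁
            · rw [if_neg (by omega)]; exact hv2 j hj
            · rw [if_pos (by omega)]
              have h3 := hsum j; rw [topm_apply] at h3
              have hu0 := hu2 j (by omega)
              by_cases h4 : j < r₁ + r₂
              · rw [if_pos h4] at h3; rw [if_pos (by omega)]; omega
              · rw [if_neg h4] at h3; rw [if_neg (by omega)]; omega
          rw [hueq, hveq]
  | step c D hc hD hf ih =>
      rename_i r f C
      have hkey : ∀ m, MvPolynomial.coeff m (f * MvPolynomial.X r + MvPolynomial.C (c:ℤ))
          = (if r ∈ m.support then MvPolynomial.coeff (m - Finsupp.single r 1) f else 0)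
            + (if m = 0 then (c:ℤ) else 0) := by
        intro m
        rw [MvPolynomial.coeff_add, MvPolynomial.coeff_mul_X', MvPolynomial.coeff_C]
        congr 1
        simp [eq_comm]
      have htop : topm (r+1) - Finsupp.single r 1 = topm r := by
        ext j
        rw [Finsupp.tsub_apply, topm_apply, topm_apply, Finsupp.single_apply]
        split_ifs <;> omega
      constructor
      · intro m hm
        rw [MvPolynomial.mem_support_iff, hkey] at hm
        by_cases h1 : r ∈ m.support
        · by_cases hm0 : m = 0
          · subst hm0; simp at h1
          · rw [if_pos h1, if_neg hm0, add_zero] at hm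
            have hm' : m - Finsupp.single r 1 ∈ f.support := MvPolynomial.mem_support_iff.mpr hm
            obtain ⟨ha, hb⟩ := ih.supp _ hm'
            have key : ∀ i : ℕ, i ≠ r → (m - Finsupp.single r 1 : ℕ →₀ ℕ) i = m i := by
              intro i hi
              rw [Finsupp.tsub_apply, Finsupp.single_apply, if_neg (fun h => hi h.symm)]
              simp
            have hr : (m - Finsupp.single r 1 : ℕ →₀ ℕ) r = m r - 1 := by
              rw [Finsupp.tsub_apply, Finsupp.single_apply, if_pos rfl]
            constructor
            · intro i
              by_cases hir : i = r
              · have h5 := hb r (le_refl r); rw [hr] at h5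
                have hrs : m r ≠ 0 := Finsupp.mem_support_iff.mp h1
                rw [hir]; omega
              · have h5 := ha i; rw [key i hir] at h5; exact h5
            · intro i hi
              have hir : i ≠ r := by omega
              have h5 := hb i (by omega); rw [key i hir] at h5; exact h5
        · rw [if_neg h1, zero_add] at hm
          have hm0 : m = 0 := by
            by_contra h; rw [if_neg h] at hm; exact hm rfl
          subst hm0; simp
      · intro m
        rw [hkey]
        have h1 : (0:ℤ) ≤ if r ∈ m.support then MvPolynomial.coeff (m - Finsupp.single r 1) f else 0 := by
          split_ifs
          · exact ih.nonneg _
          · rfl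
        have h2 : (0:ℤ) ≤ if m = 0 then (c:ℤ) else 0 := by
          split_ifs
          · exact Int.ofNat_nonneg c
          · rfl
        omega
      · rw [hkey]
        rw [if_neg (by simp), if_pos rfl, zero_add]
        simp; omega
      · rw [hkey, htop]
        have h1 : r ∈ (topm (r+1)).support := by
          rw [topm_support]; simp
        have h2 : topm (r+1) ≠ 0 := by
          intro h
          have := congrArg (fun m => m r) h
          simp [topm_apply] at this
        rw [if_pos h1, if_neg h2, add_zero]
        exact ih.lead_pos

noncomputable def vv (r : ℕ) (k : ℕ → ℕ) : ℕ → ℤ := fun i => if i < r then (3:ℤ)^(k i) else 1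

lemma eval3_eq (r : ℕ) (f : MvPolynomial ℕ ℤ) (k : ℕ → ℕ) :
    eval3 r f k = ∑ m ∈ f.support, f.coeff m * ∏ j ∈ m.support, (vv r k j) ^ m j := by
  rw [eval3, MvPolynomial.eval_eq]; rfl

lemma vv_nonneg (r : ℕ) (k : ℕ → ℕ) (j : ℕ) : 0 ≤ vv r k j := by
  rw [vv]; split_ifs
  · positivity
  · norm_num

lemma term_nonneg {r : ℕ} {f : MvPolynomial ℕ ℤ} (hg : Good r f) (k : ℕ → ℕ) (m : ℕ →₀ ℕ) :
    0 ≤ f.coeff m * ∏ j ∈ m.support, (vv r k j) ^ m j :=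
  mul_nonneg (hg.nonneg m) (Finset.prod_nonneg fun j _ => pow_nonneg (vv_nonneg r k j) _)

lemma topm_mem_support {r : ℕ} {f : MvPolynomial ℕ ℤ} (hg : Good r f) :
    topm r ∈ f.support :=
  MvPolynomial.mem_support_iff.mpr (by have := hg.lead_pos; omega)

lemma eval3_lower {r : ℕ} {f : MvPolynomial ℕ ℤ} (hg : Good r f) (k : ℕ → ℕ) :
    f.coeff (topm r) * 3 ^ (∑ i ∈ Finset.range r, k i) ≤ eval3 r f k := by
  rw [eval3_eq]
  have hprod : ∏ j ∈ (topm r).support, (vv r k j) ^ (topm r j)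
      = 3 ^ (∑ i ∈ Finset.range r, k i) := by
    rw [topm_support]
    rw [Finset.prod_congr rfl (fun j hj => ?_), Finset.prod_pow_eq_pow_sum]
    rw [topm_apply, if_pos (Finset.mem_range.mp hj), pow_one, vv]
    exact if_pos (Finset.mem_range.mp hj)
  calc f.coeff (topm r) * 3 ^ (∑ i ∈ Finset.range r, k i)
      = f.coeff (topm r) * ∏ j ∈ (topm r).support, (vv r k j) ^ (topm r j) := by rw [hprod]
    _ ≤ _ := Finset.single_le_sum (fun m _ => term_nonneg hg k m) (topm_mem_support hg)

lemma eval3_pos {r : ℕ} {f : MvPolynomial ℕ ℤ} (hg : Good r f) (k : ℕ → ℕ) :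
    0 < eval3 r f k := by
  have h1 := eval3_lower hg k
  have h2 := hg.lead_pos
  nlinarith [pow_pos (show (0:ℤ) < 3 by norm_num) (∑ i ∈ Finset.range r, k i)]

lemma eval3_update {r : ℕ} {f : MvPolynomial ℕ ℤ} (hg : Good r f) (k : ℕ → ℕ)
    (i : ℕ) (hi : i < r) :
    ∃ A B : ℤ, 0 ≤ A ∧ 1 ≤ B ∧
      ∀ m : ℕ, eval3 r f (Function.update k i m) = A * 3 ^ m + B := by
  classical
  refine ⟨∑ d ∈ f.support.filter (fun d => d i ≠ 0),
      f.coeff d * ∏ j ∈ d.support.erase i, (vv r k j) ^ d j,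
    ∑ d ∈ f.support.filter (fun d => d i = 0),
      f.coeff d * ∏ j ∈ d.support, (vv r k j) ^ d j, ?_, ?_, ?_⟩
  · refine Finset.sum_nonneg fun d _ => mul_nonneg (hg.nonneg d) ?_
    exact Finset.prod_nonneg fun j _ => pow_nonneg (vv_nonneg r k j) _
  · have h0mem : (0 : ℕ →₀ ℕ) ∈ f.support.filter (fun d => d i = 0) := by
      rw [Finset.mem_filter]
      exact ⟨MvPolynomial.mem_support_iff.mpr (by have := hg.const_pos; omega), rfl⟩
    have h2 := Finset.single_le_sum (f := fun d => f.coeff d * ∏ j ∈ d.support, (vv r k j) ^ d j)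
      (fun d _ => term_nonneg hg k d) h0mem
    simp only [Finsupp.support_zero, Finset.prod_empty, mul_one] at h2
    exact le_trans hg.const_pos h2
  · intro m
    rw [eval3_eq]
    rw [← Finset.sum_filter_add_sum_filter_not f.support (fun d => d i ≠ 0)]
    have huniv : ∀ j : ℕ, j ≠ i → vv r (Function.update k i m) j = vv r k j := by
      intro j hj
      rw [vv, vv]
      rw [Function.update_of_ne hj]
    congr 1
    · rw [Finset.sum_mul]
      refine Finset.sum_congr rfl fun d hd => ?_
      rw [Finset.mem_filter] at hd
      obtain ⟨hd1, hd2⟩ := hd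
      have hdi : d i = 1 := by
        have := (hg.supp d hd1).1 i
        omega
      have himem : i ∈ d.support := Finsupp.mem_support_iff.mpr hd2
      rw [← Finset.mul_prod_erase _ _ himem]
      have hvi : vv r (Function.update k i m) i ^ d i = 3 ^ m := by
        rw [vv, hdi, pow_one, if_pos hi, Function.update_self]
      rw [hvi]
      rw [Finset.prod_congr rfl (fun j hj => ?_)]
      · ring
      · rw [huniv j (Finset.ne_of_mem_erase hj)]
    · refine Finset.sum_congr (by simp) fun d hd => ?_
      rw [Finset.mem_filter] at hd
      obtain ⟨hd1, hd2⟩ := hd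
      refine congrArg _ (Finset.prod_congr rfl fun j hj => ?_)
      have hji : j ≠ i := by
        intro h; subst h
        exact Finsupp.mem_support_iff.mp hj hd2
      rw [huniv j hji]

lemma eval3_r0 {f : MvPolynomial ℕ ℤ} (hg : Good 0 f) (k : ℕ → ℕ) :
    eval3 0 f k = f.coeff (topm 0) := by
  have htop0 : topm 0 = 0 := by ext j; simp [topm_apply]
  rw [eval3_eq, htop0]
  have hsupp : f.support = {(0 : ℕ →₀ ℕ)} := by
    apply Finset.Subset.antisymm
    · intro m hm
      have := (hg.supp m hm).2
      have hm0 : m = 0 := by ext j; exact this j (Nat.zero_le j)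
      simp [hm0]
    · intro m hm
      rw [Finset.mem_singleton] at hm
      subst hm
      exact MvPolynomial.mem_support_iff.mpr (by have := hg.const_pos; omega)
  rw [hsupp, Finset.sum_singleton]
  simp

lemma eval3_upper {r : ℕ} {f : MvPolynomial ℕ ℤ} (hg : Good r f) (hr : 1 ≤ r) (t : ℕ) :
    eval3 r f (fun _ => t) ≤ f.coeff (topm r) * 3 ^ (r * t)
      + (∑ m ∈ f.support, f.coeff m) * 3 ^ ((r - 1) * t) := by
  classical
  rw [eval3_eq]
  have hterm : ∀ m ∈ f.support, f.coeff m * ∏ j ∈ m.support, (vv r (fun _ => t) j) ^ m j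
      = f.coeff m * 3 ^ ((∑ j ∈ m.support, m j) * t) := by
    intro m hm
    congr 1
    have hsub : ∀ j ∈ m.support, (vv r (fun _ => t) j) ^ m j = ((3:ℤ) ^ t) ^ m j := by
      intro j hj
      have hjr : j < r := by
        by_contra h
        exact Finsupp.mem_support_iff.mp hj ((hg.supp m hm).2 j (by omega))
      rw [vv]
      simp only [if_pos hjr]
    rw [Finset.prod_congr rfl hsub, Finset.prod_pow_eq_pow_sum, ← pow_mul]
    ring_nf
  rw [Finset.sum_congr rfl hterm]
  rw [← Finset.add_sum_erase _ _ (topm_mem_support hg)]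
  have htopdeg : ∑ j ∈ (topm r).support, topm r j = r := by
    rw [topm_support]
    rw [Finset.sum_congr rfl (fun j hj => by rw [topm_apply, if_pos (Finset.mem_range.mp hj)])]
    simp
  rw [htopdeg]
  refine add_le_add le_rfl ?_
  calc ∑ m ∈ f.support.erase (topm r), f.coeff m * 3 ^ ((∑ j ∈ m.support, m j) * t)
      ≤ ∑ m ∈ f.support.erase (topm r), f.coeff m * 3 ^ ((r - 1) * t) := by
        refine Finset.sum_le_sum fun m hm => ?_
        have hm' : m ∈ f.support := Finset.mem_of_mem_erase hm
        have hne : m ≠ topm r := Finset.ne_of_mem_erase hm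
        have hsubr : m.support ⊆ Finset.range r := by
          intro j hj
          rw [Finset.mem_range]
          by_contra h
          exact Finsupp.mem_support_iff.mp hj ((hg.supp m hm').2 j (by omega))
        have hssne : m.support ≠ Finset.range r := by
          intro h
          apply hne
          ext j
          rw [topm_apply]
          by_cases hjr : j < r
          · have : j ∈ m.support := h ▸ Finset.mem_range.mpr hjr
            have h1 := Finsupp.mem_support_iff.mp this
            have h2 := (hg.supp m hm').1 j
            rw [if_pos hjr]; omega
          · rw [if_neg hjr]
            exact (hg.supp m hm').2 j (by omega)
        have hcard : m.support.card < r := by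
          have h1 := Finset.card_le_card hsubr
          rw [Finset.card_range] at h1
          rcases lt_or_eq_of_le h1 with h | h
          · exact h
          · exact absurd (Finset.eq_of_subset_of_card_le hsubr (by rw [Finset.card_range, h]))
              hssne
        have hdeg : ∑ j ∈ m.support, m j ≤ r - 1 := by
          calc ∑ j ∈ m.support, m j ≤ ∑ j ∈ m.support, 1 :=
                Finset.sum_le_sum fun j _ => (hg.supp m hm').1 j
            _ = m.support.card := by simp
            _ ≤ r - 1 := by omega
        exact mul_le_mul_of_nonneg_left
          (pow_le_pow_right₀ (by norm_num) (Nat.mul_le_mul_right t hdeg)) (hg.nonneg m)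
    _ = (∑ m ∈ f.support.erase (topm r), f.coeff m) * 3 ^ ((r - 1) * t) := by
        rw [Finset.sum_mul]
    _ ≤ (∑ m ∈ f.support, f.coeff m) * 3 ^ ((r - 1) * t) := by
        refine mul_le_mul_of_nonneg_right ?_ (by positivity)
        exact Finset.sum_le_sum_of_subset_of_nonneg (Finset.erase_subset _ _)
          (fun m hm _ => hg.nonneg m)

lemma leadCoeff_eq (r : ℕ) (f : MvPolynomial ℕ ℤ) : leadCoeff r f = f.coeff (topm r) := rfl

lemma logb3_pow (n : ℕ) : Real.logb 3 ((3:ℝ) ^ n) = n := by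
  rw [Real.logb_pow, Real.logb_self_eq_one (by norm_num), mul_one]

theorem dft_strictMono_sup' (r : ℕ) (f : MvPolynomial ℕ ℤ) (C : ℕ) (hf : LDP r f C) :
    (∀ (k : ℕ → ℕ) (i : ℕ), i < r → ∀ m m' : ℕ, m < m' →
      dftF r f C (Function.update k i m) < dftF r f C (Function.update k i m')) ∧
    (⨆ k : ℕ → ℕ, dftF r f C k) = pairDft r f C := by
  classical
  have hg := good_of_LDP hf
  set a := f.coeff (topm r) with ha_def
  have ha1 : 1 ≤ a := hg.lead_pos
  have haR : (0:ℝ) < (a:ℝ) := by exact_mod_cast lt_of_lt_of_le zero_lt_one ha1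
  have hpair : pairDft r f C = (C:ℝ) - 3 * Real.logb 3 (a:ℝ) := by
    rw [pairDft, leadCoeff_eq]
  -- strict monotonicity
  have hmono : ∀ (k : ℕ → ℕ) (i : ℕ), i < r → ∀ m m' : ℕ, m < m' →
      dftF r f C (Function.update k i m) < dftF r f C (Function.update k i m') := by
    intro k i hi m m' hlt
    obtain ⟨A, B, hA, hB, hE⟩ := eval3_update hg k i hi
    have hs : ∀ m0 : ℕ, ∑ j ∈ Finset.range r, Function.update k i m0 j
        = m0 + ∑ j ∈ Finset.range r \ {i}, k j :=
      fun m0 => Finset.sum_update_of_mem (Finset.mem_range.mpr hi) k m0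
    have hpos : (0:ℤ) < eval3 r f (Function.update k i m) := eval3_pos hg _
    have hpos' : (0:ℤ) < eval3 r f (Function.update k i m') := eval3_pos hg _
    have h3 : (3:ℤ) ^ m * 3 ^ (m' - m) = 3 ^ m' := by
      rw [← pow_add]; congr 1; omega
    have h1lt : (1:ℤ) < 3 ^ (m' - m) := one_lt_pow₀ (by norm_num) (by omega)
    have hkey : eval3 r f (Function.update k i m') <
        eval3 r f (Function.update k i m) * 3 ^ (m' - m) := by
      rw [hE m, hE m']
      have h3nn : (0:ℤ) ≤ 3 ^ m := by positivity
      nlinarith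
    have hkeyR : ((eval3 r f (Function.update k i m') : ℤ) : ℝ) <
        ((eval3 r f (Function.update k i m) : ℤ) : ℝ) * 3 ^ (m' - m) := by
      exact_mod_cast hkey
    have hlog := Real.logb_lt_logb (b := 3) (by norm_num)
      (by exact_mod_cast hpos') hkeyR
    rw [Real.logb_mul (ne_of_gt (by exact_mod_cast hpos)) (by positivity)] at hlog
    rw [logb3_pow] at hlog
    have hcast : ((m' - m : ℕ) : ℝ) = (m' : ℝ) - m := by
      have : m ≤ m' := le_of_lt hlt
      push_cast [this]; ring
    rw [hcast] at hlog
    rw [dftF, dftF]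
    have hsum1 : ∑ j ∈ Finset.range r, ((Function.update k i m j : ℕ) : ℝ)
        = ((m + ∑ j ∈ Finset.range r \ {i}, k j : ℕ) : ℝ) := by exact_mod_cast hs m
    have hsum2 : ∑ j ∈ Finset.range r, ((Function.update k i m' j : ℕ) : ℝ)
        = ((m' + ∑ j ∈ Finset.range r \ {i}, k j : ℕ) : ℝ) := by exact_mod_cast hs m'
    rw [hsum1, hsum2]
    push_cast
    linarith
  refine ⟨hmono, ?_⟩
  -- upper bound
  have hbdd : ∀ k : ℕ → ℕ, dftF r f C k ≤ pairDft r f C := by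
    intro k
    have h1 := eval3_lower hg k
    set S := ∑ i ∈ Finset.range r, k i with hS
    have hpos : (0:ℤ) < eval3 r f k := eval3_pos hg k
    have h2 : Real.logb 3 ((a:ℝ) * 3 ^ S) ≤ Real.logb 3 ((eval3 r f k : ℤ) : ℝ) := by
      apply Real.logb_le_logb_of_le (by norm_num)
      · positivity
      · exact_mod_cast h1
    rw [Real.logb_mul (ne_of_gt haR) (by positivity), logb3_pow] at h2
    rw [dftF, hpair]
    have hsum : ∑ i ∈ Finset.range r, ((k i : ℕ) : ℝ) = (S : ℝ) := by
      rw [hS]; push_cast; rfl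
    rw [hsum]
    linarith
  have hbddAbove : BddAbove (Set.range (dftF r f C)) := by
    refine ⟨pairDft r f C, ?_⟩
    rintro _ ⟨k, rfl⟩
    exact hbdd k
  refine le_antisymm (ciSup_le hbdd) ?_
  -- lower bound on sup
  rcases Nat.eq_zero_or_pos r with hr | hr
  · subst hr
    have : dftF 0 f C (fun _ => 0) = pairDft 0 f C := by
      rw [dftF, hpair, eval3_r0 hg]
      simp
      rw [ha_def]
    rw [← this]
    exact le_ciSup hbddAbove _
  · obtain ⟨n, rfl⟩ : ∃ n, r = n + 1 := ⟨r - 1, by omega⟩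
    set r := n + 1
    set c := ∑ m ∈ f.support, f.coeff m with hc
    have hcnn : (0:ℤ) ≤ c := Finset.sum_nonneg fun m _ => hg.nonneg m
    set g : ℕ → ℝ := fun t => ((eval3 r f (fun _ => t) : ℤ) : ℝ) / 3 ^ (r * t) with hgdef
    have hsumt : ∀ t : ℕ, ∑ i ∈ Finset.range r, (fun _ : ℕ => t) i = r * t := by
      intro t; rw [Finset.sum_const, Finset.card_range]; ring
    have hg1 : ∀ t, (a:ℝ) ≤ g t := by
      intro t
      rw [hgdef]
      rw [le_div_iff₀ (by positivity)]
      have := eval3_lower hg (fun _ => t)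
      rw [hsumt t] at this
      exact_mod_cast this
    have hg2 : ∀ t, g t ≤ (a:ℝ) + (c:ℝ) * (1/3) ^ t := by
      intro t
      rw [hgdef, div_le_iff₀ (by positivity)]
      have hup := eval3_upper hg (by omega) t
      have hexp : ((a:ℝ) + (c:ℝ) * (1/3) ^ t) * 3 ^ (r * t)
          = (a:ℝ) * 3 ^ (r * t) + (c:ℝ) * 3 ^ ((r-1) * t) := by
        have h5 : (3:ℝ) ^ (r * t) = 3 ^ t * 3 ^ ((r-1) * t) := by
          rw [← pow_add]; congr 1
          show r * t = t + (r - 1) * t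
          simp only [r, Nat.succ_sub_one]
          ring
        rw [h5]
        field_simp
        rw [add_mul, mul_assoc (c:ℝ), ← mul_pow]; norm_num
      rw [hexp]
      exact_mod_cast hup
    have hgt : Filter.Tendsto g Filter.atTop (nhds (a:ℝ)) := by
      apply tendsto_of_tendsto_of_tendsto_of_le_of_le
        (tendsto_const_nhds) ?_ hg1 hg2
      have h0 : Filter.Tendsto (fun t : ℕ => ((1:ℝ)/3) ^ t) Filter.atTop (nhds 0) :=
        tendsto_pow_atTop_nhds_zero_of_lt_one (by norm_num) (by norm_num)
      have := (h0.const_mul (c:ℝ)).const_add (a:ℝ)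
      simpa using this
    have hlogt : Filter.Tendsto (fun t => Real.logb 3 (g t)) Filter.atTop
        (nhds (Real.logb 3 (a:ℝ))) := by
      simp only [Real.logb]
      exact (((Real.continuousAt_log (ne_of_gt haR)).tendsto.comp hgt)).div_const _
    have hdf : ∀ t : ℕ, dftF r f C (fun _ => t) = (C:ℝ) - 3 * Real.logb 3 (g t) := by
      intro t
      rw [dftF, hgdef]
      have hpos : (0:ℤ) < eval3 r f (fun _ => t) := eval3_pos hg _
      rw [Real.logb_div (by exact_mod_cast hpos.ne') (by positivity), logb3_pow]
      have hsum : ∑ i ∈ Finset.range r, (((fun _ : ℕ => t) i : ℕ) : ℝ) = ((r * t : ℕ) : ℝ) := by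
        exact_mod_cast hsumt t
      rw [hsum]
      ring
    have hfinal : Filter.Tendsto (fun t : ℕ => dftF r f C (fun _ => t)) Filter.atTop
        (nhds (pairDft r f C)) := by
      rw [hpair]
      have := hlogt.const_mul (3:ℝ)
      have h2 := (tendsto_const_nhds (x := (C:ℝ)) (f := Filter.atTop (α := ℕ))).sub this
      refine h2.congr fun t => ?_
      rw [hdf t]
    exact le_of_tendsto hfinal (Filter.Eventually.of_forall fun t =>
      le_ciSup hbddAbove (fun _ => t))

/-- `δ_{f,C}` is strictly increasing in each variable and its
supremum is `δ(f,C)`. -/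
theorem dft_strictMono_sup (r : ℕ) (f : MvPolynomial ℕ ℤ) (C : ℕ) (hf : LDP r f C) :
    (∀ (k : ℕ → ℕ) (i : ℕ), i < r → ∀ m m' : ℕ, m < m' →
      dftF r f C (Function.update k i m) < dftF r f C (Function.update k i m')) ∧
    (⨆ k : ℕ → ℕ, dftF r f C k) = pairDft r f C := by
  exact dft_strictMono_sup' r f C hf
end

section
/- Let (f,C) be a low-defect pair of degree r, and let x_{i₁},…,x_{i_s} be the variables of f that are minimal with respect to the nesting order. Then, holding the other coordinates fixed at any values, δ_{f,C}(k₁,…,k_r) tends to δ(f,C) as k_{i₁},…,k_{i_s} all tend to infinity; that is, for every ε > 0 there is K such that whenever k_{i_j} ≥ K for all j = 1,…,s, one has δ(f,C) − ε < δ_{f,C}(k₁,…,k_r) ≤ δ(f,C). -/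
/-! ### Auxiliary lemmas -/

lemma Mr_apply (r j : ℕ) :
    (∑ i ∈ Finset.range r, Finsupp.single i (1:ℕ)) j = if j < r then 1 else 0 := by
  classical
  rw [Finsupp.finset_sum_apply]
  simp only [Finsupp.single_apply]
  rw [Finset.sum_ite_eq' (Finset.range r) j (fun _ => 1)]
  simp

lemma ldp_struct {r : ℕ} {f : MvPolynomial ℕ ℤ} {C : ℕ} (h : LDP r f C) :
    (∀ m ∈ f.support, (∀ i, m i ≤ 1) ∧ ∀ i, r ≤ i → m i = 0) ∧
      (∀ m, 0 ≤ f.coeff m) ∧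
      1 ≤ f.coeff (∑ i ∈ Finset.range r, Finsupp.single i 1) := by
  classical
  induction h with
  | const k C hk hC =>
      refine ⟨?_, ?_, ?_⟩
      · intro m hm
        rw [MvPolynomial.mem_support_iff, MvPolynomial.coeff_C] at hm
        by_cases h0 : (0 : ℕ →₀ ℕ) = m
        · subst h0; simp
        · simp [h0] at hm
      · intro m
        rw [MvPolynomial.coeff_C]
        split
        · exact Int.natCast_nonneg k
        · exact le_refl 0
      · rw [Finset.range_zero, Finset.sum_empty, MvPolynomial.coeff_C, if_pos rfl]
        exact_mod_cast hk
  | @mul r₁ r₂ f₁ f₂ C₁ C₂ h1 h2 ih1 ih2 =>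
      obtain ⟨hs1, hn1, hl1⟩ := ih1
      obtain ⟨hs2, hn2, hl2⟩ := ih2
      have hinj : Function.Injective (· + r₁) := add_left_injective r₁
      set g := MvPolynomial.rename (· + r₁) f₂ with hg
      have hgco : ∀ m, g.coeff m ≠ 0 →
          ∃ u, u ∈ f₂.support ∧ m = Finsupp.mapDomain (· + r₁) u := by
        intro m hm
        obtain ⟨u, hu1, hu2⟩ := MvPolynomial.coeff_rename_ne_zero _ _ _ hm
        exact ⟨u, MvPolynomial.mem_support_iff.mpr hu2, hu1.symm⟩
      have hgnn : ∀ m, 0 ≤ g.coeff m := by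
        intro m
        by_cases hm : g.coeff m = 0
        · rw [hm]
        · obtain ⟨u, _, rfl⟩ := hgco m hm
          rw [hg, MvPolynomial.coeff_rename_mapDomain _ hinj]
          exact hn2 u
      have hmdlow : ∀ (u : ℕ →₀ ℕ) i, i < r₁ → (Finsupp.mapDomain (· + r₁) u) i = 0 := by
        intro u i hi
        apply Finsupp.mapDomain_notin_range
        rintro ⟨b, hb⟩
        have hb' : b + r₁ = i := hb
        omega
      have hmdhigh : ∀ (u : ℕ →₀ ℕ) i, r₁ ≤ i →
          (Finsupp.mapDomain (· + r₁) u) i = u (i - r₁) := by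
        intro u i hi
        have key : Finsupp.mapDomain (· + r₁) u ((i - r₁) + r₁) = u (i - r₁) :=
          Finsupp.mapDomain_apply hinj u (i - r₁)
        have heq : (i - r₁) + r₁ = i := by omega
        rw [heq] at key
        exact key
      refine ⟨?_, ?_, ?_⟩
      · intro m hm
        rw [MvPolynomial.mem_support_iff, MvPolynomial.coeff_mul] at hm
        obtain ⟨p, hp, hpne⟩ := Finset.exists_ne_zero_of_sum_ne_zero hm
        rw [Finset.HasAntidiagonal.mem_antidiagonal] at hp
        have h1c : f₁.coeff p.1 ≠ 0 := fun h => hpne (by rw [h, zero_mul])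
        have h2c : g.coeff p.2 ≠ 0 := fun h => hpne (by rw [h, mul_zero])
        obtain ⟨u, hu, hpu⟩ := hgco p.2 h2c
        have hp1 := hs1 p.1 (MvPolynomial.mem_support_iff.mpr h1c)
        have hp2 := hs2 u hu
        have hmval : ∀ i, m i = p.1 i + (Finsupp.mapDomain (· + r₁) u) i := by
          intro i
          rw [← hp, ← hpu, Finsupp.add_apply]
        constructor
        · intro i
          rw [hmval i]
          by_cases hi : i < r₁
          · rw [hmdlow u i hi]
            have := hp1.1 i; omega
          · rw [hp1.2 i (by omega), hmdhigh u i (by omega)]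
            have := hp2.1 (i - r₁); omega
        · intro i hi
          rw [hmval i, hp1.2 i (by omega), hmdhigh u i (by omega),
            hp2.2 (i - r₁) (by omega)]
      · intro m
        rw [MvPolynomial.coeff_mul]
        exact Finset.sum_nonneg fun p _ => mul_nonneg (hn1 p.1) (hgnn p.2)
      · have hsplit : ∑ i ∈ Finset.range (r₁ + r₂), Finsupp.single i (1:ℕ)
            = (∑ i ∈ Finset.range r₁, Finsupp.single i 1)
              + Finsupp.mapDomain (· + r₁) (∑ i ∈ Finset.range r₂, Finsupp.single i 1) := by
          rw [Finsupp.mapDomain_finset_sum, Finset.sum_range_add]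
          congr 1
          refine Finset.sum_congr rfl fun i _ => ?_
          rw [Finsupp.mapDomain_single]
          congr 1
          omega
        rw [hsplit, MvPolynomial.coeff_mul]
        have hmem : ((∑ i ∈ Finset.range r₁, Finsupp.single i (1:ℕ)),
            Finsupp.mapDomain (· + r₁) (∑ i ∈ Finset.range r₂, Finsupp.single i 1)) ∈
            Finset.HasAntidiagonal.antidiagonal ((∑ i ∈ Finset.range r₁, Finsupp.single i (1:ℕ))
              + Finsupp.mapDomain (· + r₁) (∑ i ∈ Finset.range r₂, Finsupp.single i 1)) :=
          Finset.HasAntidiagonal.mem_antidiagonal.mpr rfl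
        have hco : g.coeff (Finsupp.mapDomain (· + r₁)
              (∑ i ∈ Finset.range r₂, Finsupp.single i 1))
            = f₂.coeff (∑ i ∈ Finset.range r₂, Finsupp.single i 1) :=
          MvPolynomial.coeff_rename_mapDomain _ hinj _ _
        refine le_trans ?_ (Finset.single_le_sum
          (f := fun p => f₁.coeff p.1 * g.coeff p.2)
          (fun p _ => mul_nonneg (hn1 p.1) (hgnn p.2)) hmem)
        rw [hco]
        nlinarith [hl1, hl2]
  | @step r f C c D hc hD h ih =>
      obtain ⟨hs, hn, hl⟩ := ih
      refine ⟨?_, ?_, ?_⟩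
      · intro m hm
        rw [MvPolynomial.mem_support_iff, MvPolynomial.coeff_add, MvPolynomial.coeff_C] at hm
        by_cases h0 : (0 : ℕ →₀ ℕ) = m
        · subst h0; simp
        · rw [if_neg h0, add_zero, MvPolynomial.coeff_mul_X'] at hm
          split at hm
          · rename_i hr
            have hu := hs _ (MvPolynomial.mem_support_iff.mpr hm)
            have hval : ∀ i, (m - Finsupp.single r 1 : ℕ →₀ ℕ) i = m i - (if r = i then 1 else 0) := by
              intro i; rw [Finsupp.tsub_apply, Finsupp.single_apply]
            have hmr : m r ≠ 0 := Finsupp.mem_support_iff.mp hr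
            constructor
            · intro i
              by_cases hir : r = i
              · subst hir
                have h1 := hu.2 r le_rfl
                rw [hval, if_pos rfl] at h1
                omega
              · have h1 := hu.1 i
                rw [hval, if_neg hir] at h1
                omega
            · intro i hi
              have h1 := hu.2 i (by omega)
              rw [hval, if_neg (by omega)] at h1
              omega
          · exact absurd rfl hm
      · intro m
        rw [MvPolynomial.coeff_add, MvPolynomial.coeff_C, MvPolynomial.coeff_mul_X']
        have h1 : (0:ℤ) ≤ (if r ∈ m.support then f.coeff (m - Finsupp.single r 1) else 0) := by
          split
          · exact hn _
          · exact le_refl 0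
        have h2 : (0:ℤ) ≤ (if (0 : ℕ →₀ ℕ) = m then (c:ℤ) else 0) := by
          split
          · exact Int.natCast_nonneg c
          · exact le_refl 0
        linarith
      · have hne : (0 : ℕ →₀ ℕ) ≠ (∑ i ∈ Finset.range r, Finsupp.single i (1:ℕ))
            + Finsupp.single r 1 := by
          intro h0
          have h1 := congrArg (fun v : ℕ →₀ ℕ => v r) h0
          simp only [Finsupp.coe_zero, Pi.zero_apply, Finsupp.add_apply] at h1
          rw [Mr_apply, Finsupp.single_apply, if_neg (lt_irrefl r), if_pos rfl] at h1
          omega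
        rw [Finset.sum_range_succ, MvPolynomial.coeff_add, MvPolynomial.coeff_mul_X,
          MvPolynomial.coeff_C, if_neg hne, add_zero]
        exact hl

lemma exists_minVar (r : ℕ) (f : MvPolynomial ℕ ℤ) {j : ℕ} (hj : j < r) :
    ∃ i, IsMinVar r f i ∧ NestLe f i j := by
  classical
  have hne : ((Finset.range r).filter fun l => NestLe f l j).Nonempty :=
    ⟨j, Finset.mem_filter.mpr ⟨Finset.mem_range.mpr hj, fun m _ h => h⟩⟩
  obtain ⟨i, hi, hmin⟩ := Finset.exists_min_image _
    (fun l => ((Finset.range r).filter fun l' => NestLe f l' l).card) hne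
  obtain ⟨hir', hij⟩ := Finset.mem_filter.mp hi
  rw [Finset.mem_range] at hir'
  refine ⟨i, ⟨hir', ?_⟩, hij⟩
  intro j' hj' hji
  by_contra hno
  have hj'j : NestLe f j' j := fun m hm h => hij m hm (hji m hm h)
  have hj's : j' ∈ (Finset.range r).filter fun l => NestLe f l j :=
    Finset.mem_filter.mpr ⟨Finset.mem_range.mpr hj', hj'j⟩
  have hsubset : ((Finset.range r).filter fun l' => NestLe f l' j')
      ⊆ ((Finset.range r).filter fun l' => NestLe f l' i) := by
    intro l hl
    obtain ⟨hlr, hlj'⟩ := Finset.mem_filter.mp hl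
    exact Finset.mem_filter.mpr ⟨hlr, fun m hm h => hji m hm (hlj' m hm h)⟩
  have hssub : ((Finset.range r).filter fun l' => NestLe f l' j')
      ⊂ ((Finset.range r).filter fun l' => NestLe f l' i) := by
    refine (Finset.ssubset_iff_of_subset hsubset).mpr ⟨i, ?_, ?_⟩
    · exact Finset.mem_filter.mpr ⟨Finset.mem_range.mpr hir', fun m _ h => h⟩
    · intro hmem
      exact hno (Finset.mem_filter.mp hmem).2
  exact absurd (hmin j' hj's) (not_le.mpr (Finset.card_lt_card hssub))

/-- `δ_{f,C}` tends to `δ(f,C)` as the coordinates at the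
variables minimal in the nesting order tend to infinity, the others being fixed. -/
theorem dft_tendsto_pairDft (r : ℕ) (f : MvPolynomial ℕ ℤ) (C : ℕ) (hf : LDP r f C)
    (base : ℕ → ℕ) (ε : ℝ) (hε : 0 < ε) :
    ∃ K : ℕ, ∀ k : ℕ → ℕ,
      (∀ i < r, ¬ IsMinVar r f i → k i = base i) →
      (∀ i < r, IsMinVar r f i → K ≤ k i) →
      pairDft r f C - ε < dftF r f C k ∧ dftF r f C k ≤ pairDft r f C := by
  classical
  obtain ⟨hsupp, hnn, hlead⟩ := ldp_struct hf
  set M : ℕ →₀ ℕ := ∑ i ∈ Finset.range r, Finsupp.single i 1 with hMdef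
  have hMapp : ∀ j, M j = if j < r then 1 else 0 := by
    intro j; rw [hMdef]; exact Mr_apply r j
  set a : ℤ := f.coeff M with hadef
  have ha1 : (1:ℤ) ≤ a := hlead
  have hMsupp : M ∈ f.support := MvPolynomial.mem_support_iff.mpr (by omega)
  set S : ℤ := ∑ m ∈ f.support.erase M, f.coeff m with hSdef
  have hS0 : 0 ≤ S := Finset.sum_nonneg fun m _ => hnn m
  have h3R : (1:ℝ) < 3 := by norm_num
  have hrp : (1:ℝ) < (3:ℝ) ^ (ε / 3) := by
    rw [Real.one_lt_rpow_iff_of_pos (by norm_num)]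
    left; exact ⟨by norm_num, by linarith⟩
  have haR : (1:ℝ) ≤ (a:ℝ) := by exact_mod_cast ha1
  have haRpos : (0:ℝ) < (a:ℝ) := by linarith
  have hSR : (0:ℝ) ≤ (S:ℝ) := by exact_mod_cast hS0
  have hgap : 0 < (a:ℝ) * ((3:ℝ) ^ (ε/3) - 1) / ((S:ℝ) + 1) := by
    apply div_pos
    · exact mul_pos (by linarith) (by linarith)
    · linarith
  obtain ⟨K, hK⟩ := exists_pow_lt_of_lt_one hgap (show (1/3:ℝ) < 1 by norm_num)
  refine ⟨K, fun k _ hkmin => ?_⟩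
  set N : ℕ := ∑ i ∈ Finset.range r, k i with hNdef
  have hMsuppset : M.support = Finset.range r := by
    ext j
    rw [Finsupp.mem_support_iff, hMapp j, Finset.mem_range]
    split <;> simp_all
  have hterm : ∀ m ∈ f.support,
      (∏ i ∈ m.support, (if i < r then (3:ℤ) ^ (k i) else 1) ^ m i)
        = 3 ^ (∑ i ∈ m.support, k i) := by
    intro m hm
    rw [← Finset.prod_pow_eq_pow_sum]
    refine Finset.prod_congr rfl fun i hi => ?_
    have hi0 : m i ≠ 0 := Finsupp.mem_support_iff.mp hi
    have hir : i < r := by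
      by_contra hh
      exact hi0 ((hsupp m hm).2 i (by omega))
    have h1 : m i = 1 := by have := (hsupp m hm).1 i; omega
    rw [if_pos hir, h1, pow_one]
  have hEeq : eval3 r f k
      = ∑ m ∈ f.support, f.coeff m * 3 ^ (∑ i ∈ m.support, k i) := by
    rw [eval3, MvPolynomial.eval_eq]
    exact Finset.sum_congr rfl fun m hm => by rw [hterm m hm]
  have hsplit : eval3 r f k = a * 3 ^ N
      + ∑ m ∈ f.support.erase M, f.coeff m * 3 ^ (∑ i ∈ m.support, k i) := by
    rw [hEeq, ← Finset.add_sum_erase _ _ hMsupp, hMsuppset, ← hadef, ← hNdef]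
  have hEge : a * 3 ^ N ≤ eval3 r f k := by
    rw [hsplit]
    have h0 : 0 ≤ ∑ m ∈ f.support.erase M, f.coeff m * 3 ^ (∑ i ∈ m.support, k i) :=
      Finset.sum_nonneg fun m _ => mul_nonneg (hnn m) (by positivity)
    linarith
  have hEpos : 0 < eval3 r f k := by
    have : (0:ℤ) < a * 3 ^ N := mul_pos (by linarith) (by positivity)
    linarith
  have hterm_le : ∀ m ∈ f.support.erase M,
      (3:ℤ) ^ K * (f.coeff m * 3 ^ (∑ i ∈ m.support, k i)) ≤ f.coeff m * 3 ^ N := by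
    intro m hm
    obtain ⟨hmne, hmsupp⟩ := Finset.mem_erase.mp hm
    have hjex : ∃ j, j < r ∧ m j = 0 := by
      by_contra hco
      push_neg at hco
      apply hmne
      rw [hMdef]
      ext j
      rw [← hMdef, hMapp j]
      by_cases hjr : j < r
      · have h1 := (hsupp m hmsupp).1 j
        have h2 := hco j hjr
        rw [if_pos hjr]; omega
      · rw [if_neg hjr]; exact (hsupp m hmsupp).2 j (by omega)
    obtain ⟨j, hj, hmj⟩ := hjex
    obtain ⟨i0, hi0min, hi0le⟩ := exists_minVar r f hj
    have hmi0 : m i0 = 0 := by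
      by_contra hne0
      exact (hi0le m hmsupp hne0) hmj
    have hKk : K ≤ k i0 := hkmin i0 hi0min.1 hi0min
    have hsub : m.support ⊆ (Finset.range r).erase i0 := by
      intro i hi
      have hi0' : m i ≠ 0 := Finsupp.mem_support_iff.mp hi
      refine Finset.mem_erase.mpr ⟨?_, ?_⟩
      · intro hEq
        rw [hEq] at hi0'
        exact hi0' hmi0
      · refine Finset.mem_range.mpr ?_
        by_contra hh
        exact hi0' ((hsupp m hmsupp).2 i (by omega))
    have hwle : (∑ i ∈ m.support, k i) + k i0 ≤ N := by
      have h1 : ∑ i ∈ m.support, k i ≤ ∑ i ∈ (Finset.range r).erase i0, k i :=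
        Finset.sum_le_sum_of_subset hsub
      have h2 : k i0 + ∑ i ∈ (Finset.range r).erase i0, k i = ∑ i ∈ Finset.range r, k i :=
        Finset.add_sum_erase _ _ (Finset.mem_range.mpr hi0min.1)
      rw [hNdef]
      omega
    have hexp : (3:ℤ) ^ K * 3 ^ (∑ i ∈ m.support, k i) ≤ 3 ^ N := by
      rw [← pow_add]
      exact pow_le_pow_right₀ (by norm_num) (by omega)
    calc (3:ℤ) ^ K * (f.coeff m * 3 ^ (∑ i ∈ m.support, k i))
        = f.coeff m * ((3:ℤ) ^ K * 3 ^ (∑ i ∈ m.support, k i)) := by ring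
      _ ≤ f.coeff m * 3 ^ N := mul_le_mul_of_nonneg_left hexp (hnn m)
  have hEle : (3:ℤ) ^ K * eval3 r f k ≤ 3 ^ K * (a * 3 ^ N) + S * 3 ^ N := by
    rw [hsplit, mul_add, Finset.mul_sum, hSdef, Finset.sum_mul]
    exact add_le_add le_rfl (Finset.sum_le_sum hterm_le)
  -- pass to the reals
  have hEposR : (0:ℝ) < ((eval3 r f k : ℤ) : ℝ) := by exact_mod_cast hEpos
  have hAgeR : (a:ℝ) * 3 ^ N ≤ ((eval3 r f k : ℤ) : ℝ) := by exact_mod_cast hEge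
  have h3K : (0:ℝ) < 3 ^ K := by positivity
  have hAleR : ((eval3 r f k : ℤ) : ℝ) ≤ (3:ℝ) ^ N * ((a:ℝ) + (S:ℝ) / 3 ^ K) := by
    have hcast : (3:ℝ) ^ K * ((eval3 r f k : ℤ) : ℝ)
        ≤ 3 ^ K * ((a:ℝ) * 3 ^ N) + (S:ℝ) * 3 ^ N := by exact_mod_cast hEle
    rw [← mul_le_mul_iff_right₀ h3K]
    calc (3:ℝ) ^ K * ((eval3 r f k : ℤ) : ℝ)
        ≤ 3 ^ K * ((a:ℝ) * 3 ^ N) + (S:ℝ) * 3 ^ N := hcast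
      _ = (3:ℝ) ^ K * ((3:ℝ) ^ N * ((a:ℝ) + (S:ℝ) / 3 ^ K)) := by
          field_simp
  have hTpos : (0:ℝ) < (a:ℝ) + (S:ℝ) / 3 ^ K := by positivity
  have hlogpow : ∀ n : ℕ, Real.logb 3 ((3:ℝ) ^ n) = n := by
    intro n
    rw [Real.logb_pow, Real.logb_self_eq_one h3R, mul_one]
  have hlogE_ge : Real.logb 3 (a:ℝ) + (N:ℝ) ≤ Real.logb 3 ((eval3 r f k : ℤ) : ℝ) := by
    have h1 : Real.logb 3 ((a:ℝ) * 3 ^ N) ≤ Real.logb 3 ((eval3 r f k : ℤ) : ℝ) :=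
      (Real.logb_le_logb h3R (by positivity) hEposR).mpr hAgeR
    rwa [Real.logb_mul (ne_of_gt haRpos) (by positivity), hlogpow] at h1
  have hlogE_le : Real.logb 3 ((eval3 r f k : ℤ) : ℝ)
      ≤ (N:ℝ) + Real.logb 3 ((a:ℝ) + (S:ℝ) / 3 ^ K) := by
    have h2 : Real.logb 3 ((eval3 r f k : ℤ) : ℝ)
        ≤ Real.logb 3 ((3:ℝ) ^ N * ((a:ℝ) + (S:ℝ) / 3 ^ K)) :=
      (Real.logb_le_logb h3R hEposR (by positivity)).mpr hAleR
    rwa [Real.logb_mul (by positivity) (ne_of_gt hTpos), hlogpow] at h2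
  have hT1 : (S:ℝ) / 3 ^ K < (a:ℝ) * ((3:ℝ) ^ (ε/3) - 1) := by
    have h0 : ((1:ℝ)/3) ^ K = 1 / 3 ^ K := by rw [div_pow, one_pow]
    have h2 : (S:ℝ) * ((1/3:ℝ) ^ K) < ((S:ℝ) + 1) * ((1/3:ℝ) ^ K) :=
      mul_lt_mul_of_pos_right (by linarith) (by positivity)
    have h3' : ((S:ℝ) + 1) * ((1/3:ℝ) ^ K)
        < ((S:ℝ) + 1) * ((a:ℝ) * ((3:ℝ) ^ (ε/3) - 1) / ((S:ℝ) + 1)) :=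
      mul_lt_mul_of_pos_left hK (by linarith)
    have h4 : ((S:ℝ) + 1) * ((a:ℝ) * ((3:ℝ) ^ (ε/3) - 1) / ((S:ℝ) + 1))
        = (a:ℝ) * ((3:ℝ) ^ (ε/3) - 1) := by
      field_simp
    calc (S:ℝ) / 3 ^ K = (S:ℝ) * ((1/3:ℝ) ^ K) := by rw [h0]; ring
      _ < ((S:ℝ) + 1) * ((1/3:ℝ) ^ K) := h2
      _ < ((S:ℝ) + 1) * ((a:ℝ) * ((3:ℝ) ^ (ε/3) - 1) / ((S:ℝ) + 1)) := h3'
      _ = (a:ℝ) * ((3:ℝ) ^ (ε/3) - 1) := h4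
  have hloglt : Real.logb 3 ((a:ℝ) + (S:ℝ) / 3 ^ K) < Real.logb 3 (a:ℝ) + ε / 3 := by
    have hlt : (a:ℝ) + (S:ℝ) / 3 ^ K < (a:ℝ) * (3:ℝ) ^ (ε/3) := by nlinarith [hT1]
    have h5 := Real.logb_lt_logb h3R hTpos hlt
    rwa [Real.logb_mul (ne_of_gt haRpos) (by positivity),
      Real.logb_rpow (by norm_num) (by norm_num)] at h5
  have hNcast : (∑ i ∈ Finset.range r, (k i : ℝ)) = (N:ℝ) := by
    rw [hNdef]
    push_cast
    ring
  have hpd : pairDft r f C = (C:ℝ) - 3 * Real.logb 3 (a:ℝ) := by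
    rw [pairDft, leadCoeff, ← hMdef, ← hadef]
  have hdf : dftF r f C k = (C:ℝ) + 3 * (N:ℝ)
      - 3 * Real.logb 3 ((eval3 r f k : ℤ) : ℝ) := by
    rw [dftF, hNcast]
  constructor
  · rw [hdf, hpd]
    linarith
  · rw [hdf, hpd]
    linarith
end
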